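/- For n × n real positive definite matrices, the Bures distance B(A, C) := inf over orthogonal matrices U ∈ O(n) of the Frobenius norm ‖A^{1/2} − C^{1/2} U‖_F (where M^{1/2} denotes the positive semidefinite square root of M) is a metric on the set of n × n real positive definite matrices: it is symmetric, satisfies the triangle inequality, and B(A, C) = 0 if and only if A = C. -/

import Mathlib

open Matrix
open scoped Classical

noncomputable def matSqrt {n : ℕ} (A : Matrix (Fin n) (Fin n) ℝ) :
    Matrix (Fin n) (Fin n) ℝ :=
  if hA : A.PosSemidef then
    (hA.1.eigenvectorUnitary : Matrix (Fin n) (Fin n) ℝ) *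
      diagonal ((↑) ∘ (Real.sqrt ·) ∘ hA.1.eigenvalues) *
      (star hA.1.eigenvectorUnitary : Matrix (Fin n) (Fin n) ℝ)
  else 0

noncomputable def frobNorm {n : ℕ} (M : Matrix (Fin n) (Fin n) ℝ) : ℝ :=
  Real.sqrt (Mᵀ * M).trace

noncomputable def buresDist {n : ℕ} (A C : Matrix (Fin n) (Fin n) ℝ) : ℝ :=
  sInf {r : ℝ | ∃ U ∈ Matrix.orthogonalGroup (Fin n) ℝ,
    r = frobNorm (matSqrt A - matSqrt C * U)}

namespace BuresAux

variable {n : ℕ}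

lemma star_eq_transpose (U : Matrix (Fin n) (Fin n) ℝ) : star U = Uᵀ := by
  ext i j
  simp [Matrix.star_eq_conjTranspose, Matrix.conjTranspose_apply]

lemma mul_transpose_eq_one {U : Matrix (Fin n) (Fin n) ℝ}
    (hU : U ∈ Matrix.orthogonalGroup (Fin n) ℝ) : U * Uᵀ = 1 := by
  have := (Matrix.mem_orthogonalGroup_iff (Fin n) ℝ).mp hU
  exact this

lemma transpose_mul_eq_one {U : Matrix (Fin n) (Fin n) ℝ}
    (hU : U ∈ Matrix.orthogonalGroup (Fin n) ℝ) : Uᵀ * U = 1 := by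
  have := (Matrix.mem_orthogonalGroup_iff' (Fin n) ℝ).mp hU
  exact this

lemma transpose_mem {U : Matrix (Fin n) (Fin n) ℝ}
    (hU : U ∈ Matrix.orthogonalGroup (Fin n) ℝ) :
    Uᵀ ∈ Matrix.orthogonalGroup (Fin n) ℝ := by
  rw [← star_eq_transpose]
  exact Unitary.star_mem hU

lemma trace_eq_sum (M : Matrix (Fin n) (Fin n) ℝ) :
    (Mᵀ * M).trace = ∑ j, ∑ i, (M i j) ^ 2 := by
  simp [Matrix.trace, Matrix.diag, Matrix.mul_apply, sq]

lemma frobNorm_nonneg (M : Matrix (Fin n) (Fin n) ℝ) : 0 ≤ frobNorm M :=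
  Real.sqrt_nonneg _

lemma frobNorm_eq_euclidean (M : Matrix (Fin n) (Fin n) ℝ) :
    frobNorm M = ‖(WithLp.equiv 2 (Fin n × Fin n → ℝ)).symm (fun p => M p.1 p.2)‖ := by
  rw [EuclideanSpace.norm_eq, frobNorm, trace_eq_sum]
  congr 1
  rw [Fintype.sum_prod_type, Finset.sum_comm]
  simp [Real.norm_eq_abs, sq_abs]

lemma frobNorm_add_le (M N : Matrix (Fin n) (Fin n) ℝ) :
    frobNorm (M + N) ≤ frobNorm M + frobNorm N := by
  rw [frobNorm_eq_euclidean M, frobNorm_eq_euclidean N, frobNorm_eq_euclidean (M + N)]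
  have h : ((WithLp.equiv 2 (Fin n × Fin n → ℝ)).symm (fun p => (M + N) p.1 p.2)) =
      ((WithLp.equiv 2 (Fin n × Fin n → ℝ)).symm (fun p => M p.1 p.2)) +
      ((WithLp.equiv 2 (Fin n × Fin n → ℝ)).symm (fun p => N p.1 p.2)) := by
    ext p
    simp [Matrix.add_apply]
  rw [h]
  exact norm_add_le _ _

lemma frobNorm_neg (M : Matrix (Fin n) (Fin n) ℝ) : frobNorm (-M) = frobNorm M := by
  simp [frobNorm, Matrix.transpose_neg, Matrix.neg_mul, Matrix.mul_neg, neg_neg]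

lemma frobNorm_mul_orthogonal (M : Matrix (Fin n) (Fin n) ℝ) {U : Matrix (Fin n) (Fin n) ℝ}
    (hU : U ∈ Matrix.orthogonalGroup (Fin n) ℝ) : frobNorm (M * U) = frobNorm M := by
  unfold frobNorm
  congr 1
  rw [Matrix.transpose_mul]
  calc (Uᵀ * Mᵀ * (M * U)).trace = (Uᵀ * (Mᵀ * (M * U))).trace := by rw [Matrix.mul_assoc]
    _ = ((Mᵀ * (M * U)) * Uᵀ).trace := Matrix.trace_mul_comm _ _
    _ = (Mᵀ * M * (U * Uᵀ)).trace := by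
        rw [Matrix.mul_assoc, Matrix.mul_assoc, Matrix.mul_assoc]
    _ = (Mᵀ * M).trace := by rw [mul_transpose_eq_one hU, Matrix.mul_one]

lemma frobNorm_eq_zero {M : Matrix (Fin n) (Fin n) ℝ} (h : frobNorm M = 0) : M = 0 := by
  have h2 : (Mᵀ * M).trace ≤ 0 := Real.sqrt_eq_zero'.mp h
  rw [trace_eq_sum] at h2
  have h3 : ∑ j, ∑ i, (M i j) ^ 2 = 0 :=
    le_antisymm h2 (Finset.sum_nonneg fun j _ => Finset.sum_nonneg fun i _ => sq_nonneg _)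
  ext i j
  have h4 := (Finset.sum_eq_zero_iff_of_nonneg
    (fun j _ => Finset.sum_nonneg fun i _ => sq_nonneg (M i j))).mp h3 j (Finset.mem_univ j)
  have h5 := (Finset.sum_eq_zero_iff_of_nonneg
    (fun i _ => sq_nonneg (M i j))).mp h4 i (Finset.mem_univ i)
  simpa using (pow_eq_zero_iff (two_ne_zero)).mp h5

lemma matSqrt_mul_self {A : Matrix (Fin n) (Fin n) ℝ} (hA : A.PosSemidef) :
    matSqrt A * matSqrt A = A := by
  rw [matSqrt, dif_pos hA]
  have h1 : (star hA.1.eigenvectorUnitary : Matrix (Fin n) (Fin n) ℝ) *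
      (hA.1.eigenvectorUnitary : Matrix (Fin n) (Fin n) ℝ) = 1 := Unitary.coe_star_mul_self _
  have key : ∀ (U S D E : Matrix (Fin n) (Fin n) ℝ), S * U = 1 → D * D = E →
      U * D * S * (U * D * S) = U * E * S := by
    intro U S D E h1 h2
    simp only [Matrix.mul_assoc]
    rw [← Matrix.mul_assoc S U, h1, Matrix.one_mul, ← Matrix.mul_assoc D D, h2]
  rw [key _ _ _ _ h1 (diagonal_mul_diagonal _ _)]
  conv_rhs => rw [hA.1.spectral_theorem, Unitary.conjStarAlgAut_apply]
  congr 2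
  congr 1
  funext i
  simp [Real.mul_self_sqrt (hA.eigenvalues_nonneg i)]

lemma matSqrt_transpose {A : Matrix (Fin n) (Fin n) ℝ} (hA : A.PosSemidef) :
    (matSqrt A)ᵀ = matSqrt A := by
  rw [matSqrt, dif_pos hA]
  rw [Matrix.transpose_mul, Matrix.transpose_mul, diagonal_transpose,
    star_eq_transpose, transpose_transpose, Matrix.mul_assoc]

/-- The defining set of the Bures distance. -/
def S (A C : Matrix (Fin n) (Fin n) ℝ) : Set ℝ :=
  {r : ℝ | ∃ U ∈ Matrix.orthogonalGroup (Fin n) ℝ,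
    r = frobNorm (matSqrt A - matSqrt C * U)}

lemma buresDist_eq (A C : Matrix (Fin n) (Fin n) ℝ) : buresDist A C = sInf (S A C) := rfl

lemma S_nonempty (A C : Matrix (Fin n) (Fin n) ℝ) : (S A C).Nonempty :=
  ⟨frobNorm (matSqrt A - matSqrt C * 1), 1, one_mem _, rfl⟩

lemma S_bddBelow (A C : Matrix (Fin n) (Fin n) ℝ) : BddBelow (S A C) := by
  refine ⟨0, fun r hr => ?_⟩
  obtain ⟨U, hU, rfl⟩ := hr
  exact frobNorm_nonneg _

lemma S_symm (A C : Matrix (Fin n) (Fin n) ℝ) : S A C = S C A := by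
  have key : ∀ (A C : Matrix (Fin n) (Fin n) ℝ), S A C ⊆ S C A := by
    intro A C r hr
    obtain ⟨U, hU, rfl⟩ := hr
    refine ⟨Uᵀ, transpose_mem hU, ?_⟩
    have h1 : frobNorm (matSqrt A - matSqrt C * U) =
        frobNorm ((matSqrt A - matSqrt C * U) * Uᵀ) :=
      (frobNorm_mul_orthogonal _ (transpose_mem hU)).symm
    rw [h1, Matrix.sub_mul, Matrix.mul_assoc, mul_transpose_eq_one hU, Matrix.mul_one]
    rw [← frobNorm_neg (matSqrt C - matSqrt A * Uᵀ)]
    congr 1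
    abel
  exact le_antisymm (key A C) (key C A)

lemma buresDist_nonneg (A C : Matrix (Fin n) (Fin n) ℝ) : 0 ≤ buresDist A C :=
  le_csInf (S_nonempty A C) (fun r hr => by
    obtain ⟨U, hU, rfl⟩ := hr; exact frobNorm_nonneg _)

lemma buresDist_triangle (A C E : Matrix (Fin n) (Fin n) ℝ) :
    buresDist A E ≤ buresDist A C + buresDist C E := by
  have key : ∀ r ∈ S A C, ∀ s ∈ S C E, buresDist A E ≤ r + s := by
    rintro r ⟨U, hU, rfl⟩ s ⟨V, hV, rfl⟩
    have hmem : frobNorm (matSqrt A - matSqrt E * (V * U)) ∈ S A E :=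
      ⟨V * U, mul_mem hV hU, rfl⟩
    refine le_trans (csInf_le (S_bddBelow A E) hmem) ?_
    have hsplit : matSqrt A - matSqrt E * (V * U) =
        (matSqrt A - matSqrt C * U) + (matSqrt C - matSqrt E * V) * U := by
      rw [Matrix.sub_mul, Matrix.mul_assoc]
      abel
    rw [hsplit]
    refine le_trans (frobNorm_add_le _ _) ?_
    rw [frobNorm_mul_orthogonal _ hU]
  rw [buresDist_eq A C, buresDist_eq C E]
  rw [← sub_le_iff_le_add]
  refine le_csInf (S_nonempty A C) fun r hr => ?_
  rw [sub_le_iff_le_add, add_comm, ← sub_le_iff_le_add]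
  refine le_csInf (S_nonempty C E) fun s hs => ?_
  rw [sub_le_iff_le_add, add_comm]
  exact key r hr s hs

/-- The orthogonal group, as a set of matrices, is compact. -/
lemma isCompact_O : IsCompact {U : Matrix (Fin n) (Fin n) ℝ |
    U ∈ Matrix.orthogonalGroup (Fin n) ℝ} := by
  have hclosed : IsClosed {U : Matrix (Fin n) (Fin n) ℝ |
      U ∈ Matrix.orthogonalGroup (Fin n) ℝ} := by
    have : {U : Matrix (Fin n) (Fin n) ℝ | U ∈ Matrix.orthogonalGroup (Fin n) ℝ} =
        (fun U : Matrix (Fin n) (Fin n) ℝ => U * star U) ⁻¹' {1} := by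
      ext U
      simp [Matrix.mem_orthogonalGroup_iff, star_eq_transpose]
    rw [this]
    exact isClosed_singleton.preimage (continuous_id.matrix_mul continuous_star)
  have hsub : {U : Matrix (Fin n) (Fin n) ℝ | U ∈ Matrix.orthogonalGroup (Fin n) ℝ} ⊆
      Set.univ.pi (fun _ : Fin n => Set.univ.pi fun _ : Fin n => Set.Icc (-1 : ℝ) 1) := by
    intro U hU
    have h1 : Uᵀ * U = 1 := transpose_mul_eq_one hU
    intro i _
    intro j _
    have hdiag : ∑ k, U k j * U k j = 1 := by
      have := congrFun (congrFun h1 j) j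
      simpa [Matrix.mul_apply, Matrix.transpose_apply, Matrix.one_apply] using this
    have hle : U i j * U i j ≤ 1 := by
      rw [← hdiag]
      exact Finset.single_le_sum (fun k _ => mul_self_nonneg (U k j)) (Finset.mem_univ i)
    constructor
    · nlinarith
    · nlinarith
  refine IsCompact.of_isClosed_subset ?_ hclosed hsub
  exact isCompact_univ_pi fun _ => isCompact_univ_pi fun _ => isCompact_Icc

lemma exists_min (A C : Matrix (Fin n) (Fin n) ℝ) :
    ∃ U ∈ Matrix.orthogonalGroup (Fin n) ℝ,
      buresDist A C = frobNorm (matSqrt A - matSqrt C * U) := by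
  have hcont : Continuous fun U : Matrix (Fin n) (Fin n) ℝ =>
      frobNorm (matSqrt A - matSqrt C * U) := by
    have hg : Continuous fun U : Matrix (Fin n) (Fin n) ℝ =>
        matSqrt A - matSqrt C * U :=
      continuous_const.sub (continuous_const.matrix_mul continuous_id)
    exact Real.continuous_sqrt.comp ((hg.matrix_transpose.matrix_mul hg).matrix_trace)
  obtain ⟨U₀, hU₀, hmin⟩ := isCompact_O.exists_isMinOn ⟨1, show (1 : Matrix (Fin n) (Fin n) ℝ) ∈ Matrix.orthogonalGroup (Fin n) ℝ from one_mem _⟩ hcont.continuousOn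
  refine ⟨U₀, hU₀, ?_⟩
  refine le_antisymm (csInf_le (S_bddBelow A C) ⟨U₀, hU₀, rfl⟩) ?_
  refine le_csInf (S_nonempty A C) fun r hr => ?_
  obtain ⟨U, hU, rfl⟩ := hr
  exact hmin hU

lemma buresDist_eq_zero_iff {A C : Matrix (Fin n) (Fin n) ℝ}
    (hA : A.PosSemidef) (hC : C.PosSemidef) : buresDist A C = 0 ↔ A = C := by
  constructor
  · intro h0
    obtain ⟨U, hU, hmin⟩ := exists_min A C
    rw [h0] at hmin
    have hM : matSqrt A - matSqrt C * U = 0 := frobNorm_eq_zero hmin.symm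
    have heq : matSqrt A = matSqrt C * U := by
      rw [sub_eq_zero] at hM; exact hM
    calc A = matSqrt A * (matSqrt A)ᵀ := by rw [matSqrt_transpose hA, matSqrt_mul_self hA]
      _ = (matSqrt C * U) * (matSqrt C * U)ᵀ := by rw [heq]
      _ = matSqrt C * (U * Uᵀ) * (matSqrt C)ᵀ := by
          rw [Matrix.transpose_mul, Matrix.mul_assoc, Matrix.mul_assoc, Matrix.mul_assoc]
      _ = C := by
          rw [mul_transpose_eq_one hU, Matrix.mul_one, matSqrt_transpose hC,
            matSqrt_mul_self hC]
  · rintro rfl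
    refine le_antisymm ?_ (buresDist_nonneg A A)
    have hmem : (0 : ℝ) ∈ S A A := by
      refine ⟨1, one_mem _, ?_⟩
      rw [Matrix.mul_one, sub_self]
      simp [frobNorm]
    exact csInf_le (S_bddBelow A A) hmem

end BuresAux

theorem stmt5 {n : ℕ}
    (d : {A : Matrix (Fin n) (Fin n) ℝ // A.PosDef} →
         {A : Matrix (Fin n) (Fin n) ℝ // A.PosDef} → ℝ)
    (hd : ∀ A C : {A : Matrix (Fin n) (Fin n) ℝ // A.PosDef},
      d A C = buresDist (A : Matrix (Fin n) (Fin n) ℝ) (C : Matrix (Fin n) (Fin n) ℝ)) :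
    (∀ A C : {A : Matrix (Fin n) (Fin n) ℝ // A.PosDef}, d A C = d C A) ∧
    (∀ A C E : {A : Matrix (Fin n) (Fin n) ℝ // A.PosDef}, d A E ≤ d A C + d C E) ∧
    (∀ A C : {A : Matrix (Fin n) (Fin n) ℝ // A.PosDef}, (d A C = 0 ↔ A = C)) := by
  refine ⟨fun A C => ?_, fun A C E => ?_, fun A C => ?_⟩
  · rw [hd, hd, BuresAux.buresDist_eq, BuresAux.buresDist_eq, BuresAux.S_symm]
  · rw [hd, hd, hd]
    exact BuresAux.buresDist_triangle _ _ _
  · rw [hd, BuresAux.buresDist_eq_zero_iff A.2.posSemidef C.2.posSemidef]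
    exact ⟨fun h => Subtype.ext h, fun h => congrArg _ h⟩
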